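/- Let n ≥ 1, λ ≠ 0 and θ ∈ ℝ^{n−1}. Consider the n × (n+1) real matrix Π_{λ,θ} whose first row is ( (1/2)(λ + 1/λ) − |θ|²/(4λ), θ/(λ√2), −(1/2)(λ − 1/λ) + |θ|²/(4λ) ) and whose remaining (n−1) rows form the block ( −θ/√2, I_{n−1}, θ/√2 ), where I_{n−1} is the (n−1)×(n−1) identity matrix. Then Π_{λ,θ} has rank n, and the kernel of Π_{λ,θ} is the one-dimensional span of the unit vector G(θ,λ) = ( 1/2 − |θ|²/4 − λ²/2, θ/√2, −1/2 − |θ|²/4 − λ²/2 ) / √( 1/2 + |θ|²/2 + 2(|θ|²/4 + λ²/2)² ) ∈ ℝ^{n+1}. -/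

import Mathlib

open MeasureTheory Real Metric Set
open scoped RealInnerProductSpace ENNReal NNReal

noncomputable section

/-- The linear action of the `n × (n+1)` matrix `Π_{λ,θ}`, on `ℝ^{n+1}` written as
`ℝ × ℝ^{n-1} × ℝ`, with values in `ℝ^n` written as `ℝ × ℝ^{n-1}`. -/
def PiFun {m : ℕ} (l : ℝ) (θ : EuclideanSpace ℝ (Fin m))
    (p : ℝ × EuclideanSpace ℝ (Fin m) × ℝ) : ℝ × EuclideanSpace ℝ (Fin m) :=
  (((l + l⁻¹) / 2 - ‖θ‖ ^ 2 / (4 * l)) * p.1 + ⟪θ, p.2.1⟫ / (l * Real.sqrt 2) +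
      (-((l - l⁻¹) / 2) + ‖θ‖ ^ 2 / (4 * l)) * p.2.2,
    p.2.1 + ((p.2.2 - p.1) / Real.sqrt 2) • θ)

/-- The unit vector `G(θ, λ)` spanning the kernel of `Π_{λ,θ}`. -/
def kerG {m : ℕ} (l : ℝ) (θ : EuclideanSpace ℝ (Fin m)) :
    ℝ × EuclideanSpace ℝ (Fin m) × ℝ :=
  (Real.sqrt (1 / 2 + ‖θ‖ ^ 2 / 2 + 2 * (‖θ‖ ^ 2 / 4 + l ^ 2 / 2) ^ 2))⁻¹ •
    (1 / 2 - ‖θ‖ ^ 2 / 4 - l ^ 2 / 2,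
      (Real.sqrt 2)⁻¹ • θ,
      -(1 / 2) - ‖θ‖ ^ 2 / 4 - l ^ 2 / 2)

set_option maxHeartbeats 1000000 in
/-- For `λ ≠ 0`, the matrix `Π_{λ,θ}` is linear of full rank `n`
(i.e. surjective onto `ℝⁿ`), and its kernel is the one-dimensional span of the unit
vector `G(θ,λ)`. -/
theorem PiFun_rank_and_kernel (n : ℕ) (hn : 1 ≤ n) (l : ℝ) (hl : l ≠ 0)
    (θ : EuclideanSpace ℝ (Fin (n - 1))) :
    IsLinearMap ℝ (PiFun l θ) ∧
    Function.Surjective (PiFun l θ) ∧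
    {p : ℝ × EuclideanSpace ℝ (Fin (n - 1)) × ℝ | PiFun l θ p = 0} =
      (Submodule.span ℝ {kerG l θ} : Set (ℝ × EuclideanSpace ℝ (Fin (n - 1)) × ℝ)) ∧
    (kerG l θ).1 ^ 2 + ‖(kerG l θ).2.1‖ ^ 2 + (kerG l θ).2.2 ^ 2 = 1 := by
  refine ⟨?_, ?_, ?_, ?_⟩
  · constructor
    · rintro ⟨a, v, b⟩ ⟨a', v', b'⟩
      simp only [PiFun, Prod.mk_add_mk, Prod.mk.injEq, inner_add_right]
      exact ⟨by ring, by module⟩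
    · rintro c ⟨a, v, b⟩
      simp only [PiFun, Prod.smul_mk, smul_eq_mul, inner_smul_right, Prod.mk.injEq]
      exact ⟨by ring, by module⟩
  · have hr2 : Real.sqrt 2 ^ 2 = 2 := Real.sq_sqrt (by norm_num)
    have hr0 : Real.sqrt 2 ≠ 0 := by positivity
    have ht0 : (0:ℝ) ≤ ‖θ‖ ^ 2 := sq_nonneg _
    rintro ⟨a, v⟩
    simp only [PiFun]
    set r := Real.sqrt 2 with hrdef
    clear_value r
    have hrr : r * r = 2 := by rw [← pow_two]; exact hr2
    set t := ‖θ‖ ^ 2 with htdef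
    have hC : ((l + l⁻¹)/2 + t/(4*l)) ≠ 0 := by
      intro h0
      have h : ((l + l⁻¹)/2 + t/(4*l)) * (4*l) = 2*l^2 + 2 + t := by field_simp; ring
      rw [h0, zero_mul] at h
      nlinarith [sq_nonneg l]
    set C := (l + l⁻¹)/2 + t/(4*l) with hCdef
    set i := (⟪θ, v⟫ : ℝ) with hidef
    set p1 := (a - i/(l*r))/C with hp1def
    have hCp : p1 * C = a - i/(l*r) := div_mul_cancel₀ _ hC
    have hAC : ((l + l⁻¹) / 2 - t / (4 * l)) + t/(2*l) = C := by rw [hCdef]; field_simp; ring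
    clear_value t C i p1
    refine ⟨(p1, v + (p1/r) • θ, 0), ?_⟩
    have e1 : ((p1/r)*t)/(l*r) = p1 * (t/(2*l)) := by
      rw [show (2:ℝ) = r*r from hrr.symm]
      field_simp
    have h1 : ((l + l⁻¹) / 2 - t / (4 * l)) * p1 + ⟪θ, v + (p1/r) • θ⟫ / (l * r) +
        (-((l - l⁻¹) / 2) + t / (4 * l)) * 0 = a := by
      rw [inner_add_right, inner_smul_right, real_inner_self_eq_norm_sq, ← htdef, ← hidef]
      have hsplit : (i + (p1/r)*t)/(l*r) = i/(l*r) + p1 * (t/(2*l)) := by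
        rw [add_div, e1]
      rw [hsplit]
      linear_combination hCp + p1 * hAC
    have h2' : (v + (p1/r) • θ) + ((0 - p1)/r) • θ = v := by
      rw [add_assoc, ← add_smul, show p1/r + (0 - p1)/r = 0 by ring, zero_smul, add_zero]
    rw [Prod.ext_iff]
    exact ⟨h1, h2'⟩
  · have hr2 : Real.sqrt 2 ^ 2 = 2 := Real.sq_sqrt (by norm_num)
    have hr0 : Real.sqrt 2 ≠ 0 := by positivity
    have ht0 : (0:ℝ) ≤ ‖θ‖ ^ 2 := sq_nonneg _
    have hs0 : Real.sqrt (1 / 2 + ‖θ‖ ^ 2 / 2 + 2 * (‖θ‖ ^ 2 / 4 + l ^ 2 / 2) ^ 2) ≠ 0 := by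
      positivity
    simp only [kerG]
    set r := Real.sqrt 2 with hrdef
    have hrr : r * r = 2 := by rw [← pow_two]; exact hr2
    set t := ‖θ‖ ^ 2 with htdef
    set s := Real.sqrt (1 / 2 + t / 2 + 2 * (t / 4 + l ^ 2 / 2) ^ 2) with hsdef
    clear_value s
    set w : ℝ × EuclideanSpace ℝ (Fin (n - 1)) × ℝ :=
      (1 / 2 - t / 4 - l ^ 2 / 2, r⁻¹ • θ, -(1 / 2) - t / 4 - l ^ 2 / 2) with hwdef
    have hw : PiFun l θ w = 0 := by
      rw [hwdef]
      simp only [PiFun]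
      rw [← hrdef, Prod.ext_iff]
      simp only [Prod.fst_zero, Prod.snd_zero]
      constructor
      · rw [inner_smul_right, real_inner_self_eq_norm_sq, ← htdef]
        have e0 : (r⁻¹*t)/(l*r) = t/(2*l) := by
          rw [show (2:ℝ) = r*r from hrr.symm]
          field_simp
        rw [e0]
        field_simp
        ring
      · show r⁻¹ • θ + ((-(1 / 2) - t / 4 - l ^ 2 / 2 - (1 / 2 - t / 4 - l ^ 2 / 2)) / r) • θ
          = (0 : EuclideanSpace ℝ (Fin (n-1)))
        rw [← add_smul, show r⁻¹ + ((-(1/2) - t/4 - l^2/2) - (1/2 - t/4 - l^2/2))/r = 0 by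
          field_simp; ring, zero_smul]
    ext p
    simp only [mem_setOf_eq, SetLike.mem_coe, Submodule.mem_span_singleton]
    constructor
    · intro hp
      simp only [PiFun, Prod.ext_iff, Prod.fst_zero, Prod.snd_zero] at hp
      rw [← hrdef] at hp
      obtain ⟨e1, e2⟩ := hp
      have hp2 : p.2.1 = ((p.1 - p.2.2)/r) • θ := by
        have h := eq_neg_of_add_eq_zero_left e2
        rw [h, ← neg_smul]
        congr 1
        ring
      rw [hp2, inner_smul_right, real_inner_self_eq_norm_sq, ← htdef] at e1
      have emid : (((p.1 - p.2.2)/r)*t)/(l*r) = (p.1 - p.2.2) * (t/(2*l)) := by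
        rw [show (2:ℝ) = r*r from hrr.symm]
        field_simp
      rw [emid] at e1
      have hy : l * l⁻¹ = 1 := mul_inv_cancel₀ hl
      have key : p.1*(l^2+1+t/2) = p.2.2*(l^2-1+t/2) := by
        linear_combination (2*l)*e1 - (p.1 + p.2.2) * hy + (t/2)*(p.2.2 - p.1) * hy
      have hp1 : p.1 = (p.1 - p.2.2) * (1/2 - t/4 - l^2/2) := by linear_combination key/2
      have hp3 : p.2.2 = (p.1 - p.2.2) * (-(1/2) - t/4 - l^2/2) := by linear_combination key/2
      refine ⟨(p.1 - p.2.2) * s, ?_⟩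
      rw [smul_smul, mul_assoc, mul_inv_cancel₀ hs0, mul_one, hwdef]
      rw [Prod.ext_iff, Prod.ext_iff]
      refine ⟨hp1.symm, ?_, hp3.symm⟩
      show (p.1 - p.2.2) • r⁻¹ • θ = p.2.1
      rw [smul_smul, hp2, div_eq_mul_inv]
    · rintro ⟨c, rfl⟩
      rw [smul_smul]
      have hlin : IsLinearMap ℝ (PiFun l θ) := by
        constructor
        · rintro ⟨a, v, b⟩ ⟨a', v', b'⟩
          simp only [PiFun, Prod.mk_add_mk, Prod.mk.injEq, inner_add_right]
          exact ⟨by ring, by module⟩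
        · rintro e ⟨a, v, b⟩
          simp only [PiFun, Prod.smul_mk, smul_eq_mul, inner_smul_right, Prod.mk.injEq]
          exact ⟨by ring, by module⟩
      rw [hlin.map_smul, hw, smul_zero]
  · have hr2 : Real.sqrt 2 ^ 2 = 2 := Real.sq_sqrt (by norm_num)
    have hr0 : Real.sqrt 2 ≠ 0 := by positivity
    have ht0 : (0:ℝ) ≤ ‖θ‖ ^ 2 := sq_nonneg _
    have hs2 : Real.sqrt (1 / 2 + ‖θ‖ ^ 2 / 2 + 2 * (‖θ‖ ^ 2 / 4 + l ^ 2 / 2) ^ 2) ^ 2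
        = 1 / 2 + ‖θ‖ ^ 2 / 2 + 2 * (‖θ‖ ^ 2 / 4 + l ^ 2 / 2) ^ 2 :=
      Real.sq_sqrt (by positivity)
    have hs0 : Real.sqrt (1 / 2 + ‖θ‖ ^ 2 / 2 + 2 * (‖θ‖ ^ 2 / 4 + l ^ 2 / 2) ^ 2) ≠ 0 := by
      positivity
    simp only [kerG]
    set r := Real.sqrt 2 with hrdef
    set t := ‖θ‖ ^ 2 with htdef
    set s := Real.sqrt (1 / 2 + t / 2 + 2 * (t / 4 + l ^ 2 / 2) ^ 2) with hsdef
    clear_value s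
    have hA : (1 / 2 + t / 2 + 2 * (t / 4 + l ^ 2 / 2) ^ 2) ≠ 0 := by positivity
    show (s⁻¹ * (1 / 2 - t / 4 - l ^ 2 / 2))^2 + ‖s⁻¹ • r⁻¹ • θ‖^2 +
      (s⁻¹ * (-(1 / 2) - t / 4 - l ^ 2 / 2))^2 = 1
    rw [norm_smul, norm_smul, Real.norm_eq_abs, Real.norm_eq_abs,
      mul_pow, mul_pow, mul_pow, mul_pow, sq_abs, sq_abs, ← htdef,
      inv_pow, inv_pow, hr2, hs2]
    field_simp
    ring
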